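/- The function V(t) = ∑_{k=0}^∞ q^{k(k-1)/2} (-x t)^k / ((t;q)_{k+1} (a t;q)_{k+1}), defined and analytic for |t| < min(1, a^{-1}), satisfies the q-difference equation (1 - t)(1 - a t) V(t) = 1 - x t V(q t). -/

import Mathlib

open Finset

/-- Finite q-Pochhammer symbol `(z;q)_k = ∏_{j<k} (1 - z qʲ)`. -/
noncomputable def qPoch (z q : ℂ) (k : ℕ) : ℂ := ∏ j ∈ range k, (1 - z * q ^ j)

lemma triangle_id (k : ℕ) : (k + 1) * ((k + 1) - 1) / 2 = k * (k - 1) / 2 + k := by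
  rw [← Finset.sum_range_id, ← Finset.sum_range_id, Finset.sum_range_succ]

lemma abs_lt_one_aux {q : ℝ} (hq0 : 0 ≤ q) (hq1 : q ≤ 1) {z : ℂ} (hz : ‖z‖ < 1)
    (j : ℕ) : ‖z * (q : ℂ) ^ j‖ < 1 := by
  rw [norm_mul, norm_pow, Complex.norm_real, Real.norm_eq_abs, abs_of_nonneg hq0]
  have h1 : q ^ j ≤ 1 := pow_le_one₀ hq0 hq1
  nlinarith [norm_nonneg z, pow_nonneg hq0 j]

lemma one_sub_ne {w : ℂ} (h : ‖w‖ < 1) : 1 - w ≠ 0 := by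
  intro h0
  have h1 : (1 : ℂ) = w := sub_eq_zero.mp h0
  rw [← h1] at h
  simp at h

lemma qPoch_ne_zero {q : ℝ} (hq0 : 0 ≤ q) (hq1 : q ≤ 1) {z : ℂ} (hz : ‖z‖ < 1)
    (k : ℕ) : qPoch z (q : ℂ) k ≠ 0 := by
  unfold qPoch
  exact Finset.prod_ne_zero_iff.mpr fun j _ => one_sub_ne (abs_lt_one_aux hq0 hq1 hz j)

lemma one_sub_abs_le {q : ℝ} (hq0 : 0 ≤ q) (hq1 : q ≤ 1) (z : ℂ) (j : ℕ) :
    1 - ‖z‖ ≤ ‖1 - z * (q : ℂ) ^ j‖ := by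
  have h1 : ‖z * (q : ℂ) ^ j‖ ≤ ‖z‖ := by
    rw [norm_mul, norm_pow, Complex.norm_real, Real.norm_eq_abs, abs_of_nonneg hq0]
    have h2 : q ^ j ≤ 1 := pow_le_one₀ hq0 hq1
    nlinarith [norm_nonneg z, pow_nonneg hq0 j]
  have h3 := norm_sub_norm_le (1 : ℂ) (z * (q : ℂ) ^ j)
  simp only [norm_one] at h3
  linarith

lemma qPoch_succ_right (z q : ℂ) (k : ℕ) :
    qPoch z q (k + 1) = qPoch z q k * (1 - z * q ^ k) := by
  unfold qPoch; exact Finset.prod_range_succ _ _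

lemma qPoch_factor (z w : ℂ) (k : ℕ) :
    qPoch z w (k + 1) = (1 - z) * qPoch (w * z) w k := by
  unfold qPoch
  rw [Finset.prod_range_succ']
  rw [pow_zero, mul_one, mul_comm]
  congr 1
  exact Finset.prod_congr rfl fun j _ => by rw [pow_succ]; ring

lemma summable_aux (a q : ℝ) (ha : 0 < a) (hq0 : 0 < q) (hq1 : q < 1) (x s : ℂ)
    (hs1 : ‖s‖ < 1) (hs2 : a * ‖s‖ < 1) :
    Summable (fun k : ℕ =>
      (q : ℂ) ^ (k * (k - 1) / 2 : ℕ) * (-x * s) ^ k /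
        (qPoch s q (k + 1) * qPoch ((a : ℂ) * s) q (k + 1))) := by
  have has : ‖(a : ℂ) * s‖ < 1 := by
    rw [norm_mul, Complex.norm_real, Real.norm_eq_abs, abs_of_pos ha]; exact hs2
  have hc1p : (0 : ℝ) < 1 - ‖s‖ := by linarith
  have hc2p : (0 : ℝ) < 1 - ‖(a : ℂ) * s‖ := by linarith
  apply summable_of_ratio_norm_eventually_le (r := 1/2) (by norm_num)
  have htend : Filter.Tendsto (fun k : ℕ => q ^ k * ‖x * s‖)
      Filter.atTop (nhds 0) := by
    simpa using (tendsto_pow_atTop_nhds_zero_of_lt_one hq0.le hq1).mul_const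
      (‖x * s‖)
  have hev : ∀ᶠ k in Filter.atTop, q ^ k * ‖x * s‖ <
      (1/2) * ((1 - ‖s‖) * (1 - ‖(a : ℂ) * s‖)) :=
    htend.eventually (gt_mem_nhds (by positivity))
  filter_upwards [hev] with k hk
  have hPne : qPoch s (q : ℂ) (k + 1) ≠ 0 := qPoch_ne_zero hq0.le hq1.le hs1 _
  have hQne : qPoch ((a : ℂ) * s) (q : ℂ) (k + 1) ≠ 0 := qPoch_ne_zero hq0.le hq1.le has _
  have hbne1 : (1 : ℂ) - s * (q : ℂ) ^ (k + 1) ≠ 0 :=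
    one_sub_ne (abs_lt_one_aux hq0.le hq1.le hs1 (k + 1))
  have hbne2 : (1 : ℂ) - (a : ℂ) * s * (q : ℂ) ^ (k + 1) ≠ 0 :=
    one_sub_ne (abs_lt_one_aux hq0.le hq1.le has (k + 1))
  have e3 : (q : ℂ) ^ ((k + 1) * ((k + 1) - 1) / 2) =
      (q : ℂ) ^ (k * (k - 1) / 2) * (q : ℂ) ^ k := by rw [triangle_id, pow_add]
  have hfact : (q : ℂ) ^ ((k + 1) * ((k + 1) - 1) / 2 : ℕ) * (-x * s) ^ (k + 1) /
        (qPoch s q ((k + 1) + 1) * qPoch ((a : ℂ) * s) q ((k + 1) + 1)) =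
      ((q : ℂ) ^ k * (-x * s) /
          ((1 - s * (q : ℂ) ^ (k + 1)) * (1 - (a : ℂ) * s * (q : ℂ) ^ (k + 1)))) *
        ((q : ℂ) ^ (k * (k - 1) / 2 : ℕ) * (-x * s) ^ k /
          (qPoch s q (k + 1) * qPoch ((a : ℂ) * s) q (k + 1))) := by
    rw [qPoch_succ_right s, qPoch_succ_right ((a : ℂ) * s), e3]
    field_simp
    ring
  rw [hfact, norm_mul, norm_div]
  have hg : ‖(q : ℂ) ^ k * (-x * s)‖ /
      ‖(1 - s * (q : ℂ) ^ (k + 1)) * (1 - (a : ℂ) * s * (q : ℂ) ^ (k + 1))‖ ≤ 1/2 := by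
    have hnum : ‖(q : ℂ) ^ k * (-x * s)‖ = q ^ k * ‖x * s‖ := by
      simp only [norm_mul, norm_pow, Complex.norm_real, Real.norm_eq_abs,
        abs_of_pos hq0, norm_neg]
    have hD1 := one_sub_abs_le hq0.le hq1.le s (k + 1)
    have hD2 := one_sub_abs_le hq0.le hq1.le ((a : ℂ) * s) (k + 1)
    have hDen : ‖(1 - s * (q : ℂ) ^ (k + 1)) * (1 - (a : ℂ) * s * (q : ℂ) ^ (k + 1))‖ =
        ‖1 - s * (q : ℂ) ^ (k + 1)‖ *
          ‖1 - (a : ℂ) * s * (q : ℂ) ^ (k + 1)‖ := by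
      rw [norm_mul]
    rw [hnum, hDen]
    have hDpos : 0 < ‖1 - s * (q : ℂ) ^ (k + 1)‖ *
        ‖1 - (a : ℂ) * s * (q : ℂ) ^ (k + 1)‖ := by nlinarith
    rw [div_le_iff₀ hDpos]
    nlinarith [norm_nonneg (1 - s * (q : ℂ) ^ (k + 1)),
      norm_nonneg (1 - (a : ℂ) * s * (q : ℂ) ^ (k + 1))]
  exact mul_le_mul_of_nonneg_right hg (norm_nonneg _)

/-- `V(t) = ∑ₖ q^{k(k-1)/2}(-xt)ᵏ/((t;q)_{k+1}(at;q)_{k+1})` converges for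
`|t| < min(1, a⁻¹)` and satisfies `(1-t)(1-at)V(t) = 1 - x t V(qt)`. -/
theorem stmt4 (a q : ℝ) (ha : 0 < a) (hq0 : 0 < q) (hq1 : q < 1) (x : ℂ)
    (V : ℂ → ℂ)
    (hV : ∀ t : ℂ, V t = ∑' k : ℕ,
      (q : ℂ) ^ (k * (k - 1) / 2 : ℕ) * (-x * t) ^ k /
        (qPoch t q (k + 1) * qPoch ((a : ℂ) * t) q (k + 1)))
    (t : ℂ) (ht : ‖t‖ < min 1 a⁻¹) :
    Summable (fun k : ℕ =>
      (q : ℂ) ^ (k * (k - 1) / 2 : ℕ) * (-x * t) ^ k /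
        (qPoch t q (k + 1) * qPoch ((a : ℂ) * t) q (k + 1)))
    ∧ (1 - t) * (1 - (a : ℂ) * t) * V t = 1 - x * t * V ((q : ℂ) * t) := by
  have ht1 : ‖t‖ < 1 := lt_of_lt_of_le ht (min_le_left _ _)
  have hta : ‖t‖ < a⁻¹ := lt_of_lt_of_le ht (min_le_right _ _)
  have ht2 : a * ‖t‖ < 1 := by
    have := mul_lt_mul_of_pos_left hta ha
    rwa [mul_inv_cancel₀ ha.ne'] at this
  have hf := summable_aux a q ha hq0 hq1 x t ht1 ht2
  refine ⟨hf, ?_⟩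
  have habsqt : ‖(q : ℂ) * t‖ = q * ‖t‖ := by
    rw [norm_mul, Complex.norm_real, Real.norm_eq_abs, abs_of_pos hq0]
  have hqt1 : ‖(q : ℂ) * t‖ < 1 := by
    rw [habsqt]; nlinarith [norm_nonneg t]
  have hqt2 : a * ‖(q : ℂ) * t‖ < 1 := by
    rw [habsqt]; nlinarith [norm_nonneg t]
  have hg := summable_aux a q ha hq0 hq1 x ((q : ℂ) * t) hqt1 hqt2
  have hat : ‖(a : ℂ) * t‖ < 1 := by
    rw [norm_mul, Complex.norm_real, Real.norm_eq_abs, abs_of_pos ha]; exact ht2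
  have hqat : ‖(q : ℂ) * ((a : ℂ) * t)‖ < 1 := by
    rw [norm_mul, Complex.norm_real, Real.norm_eq_abs, abs_of_pos hq0]
    nlinarith [norm_nonneg ((a : ℂ) * t)]
  set W : ℕ → ℂ := fun k => (q : ℂ) ^ (k * (k - 1) / 2 : ℕ) * (-x * t) ^ k /
      (qPoch ((q : ℂ) * t) q k * qPoch ((q : ℂ) * ((a : ℂ) * t)) q k) with hWdef
  have hne_t : (1 : ℂ) - t ≠ 0 := one_sub_ne ht1
  have hne_at : (1 : ℂ) - (a : ℂ) * t ≠ 0 := one_sub_ne hat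
  have hI1 : ∀ k : ℕ, (1 - t) * (1 - (a : ℂ) * t) *
      ((q : ℂ) ^ (k * (k - 1) / 2 : ℕ) * (-x * t) ^ k /
        (qPoch t q (k + 1) * qPoch ((a : ℂ) * t) q (k + 1))) = W k := by
    intro k
    have hP : qPoch ((q : ℂ) * t) (q : ℂ) k ≠ 0 := qPoch_ne_zero hq0.le hq1.le hqt1 k
    have hQ : qPoch ((q : ℂ) * ((a : ℂ) * t)) (q : ℂ) k ≠ 0 :=
      qPoch_ne_zero hq0.le hq1.le hqat k
    rw [hWdef]
    rw [qPoch_factor t, qPoch_factor ((a : ℂ) * t)]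
    dsimp only
    rw [mul_mul_mul_comm (1 - t) (qPoch ((q : ℂ) * t) q k), ← mul_div_assoc,
      mul_div_mul_left _ _ (mul_ne_zero hne_t hne_at)]
  have hI2 : ∀ k : ℕ, -(x * t) *
      ((q : ℂ) ^ (k * (k - 1) / 2 : ℕ) * (-x * ((q : ℂ) * t)) ^ k /
        (qPoch ((q : ℂ) * t) q (k + 1) * qPoch ((a : ℂ) * ((q : ℂ) * t)) q (k + 1))) =
      W (k + 1) := by
    intro k
    have harg : (a : ℂ) * ((q : ℂ) * t) = (q : ℂ) * ((a : ℂ) * t) := by ring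
    have e3 : (q : ℂ) ^ ((k + 1) * ((k + 1) - 1) / 2) =
        (q : ℂ) ^ (k * (k - 1) / 2) * (q : ℂ) ^ k := by rw [triangle_id, pow_add]
    have hP1 : qPoch ((q : ℂ) * t) (q : ℂ) (k + 1) ≠ 0 :=
      qPoch_ne_zero hq0.le hq1.le hqt1 _
    have hQ1 : qPoch ((q : ℂ) * ((a : ℂ) * t)) (q : ℂ) (k + 1) ≠ 0 :=
      qPoch_ne_zero hq0.le hq1.le hqat _
    rw [hWdef]
    simp only [harg, e3]
    rw [show -x * ((q : ℂ) * t) = (-x * t) * (q : ℂ) from by ring, mul_pow, pow_succ]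
    field_simp
  have hWsum : Summable W := (hf.mul_left ((1 - t) * (1 - (a : ℂ) * t))).congr hI1
  rw [hV t, hV ((q : ℂ) * t)]
  have hL : (1 - t) * (1 - (a : ℂ) * t) *
      ∑' k : ℕ, (q : ℂ) ^ (k * (k - 1) / 2 : ℕ) * (-x * t) ^ k /
        (qPoch t q (k + 1) * qPoch ((a : ℂ) * t) q (k + 1)) = ∑' k, W k := by
    rw [← tsum_mul_left]
    exact tsum_congr hI1
  have h1 : x * t * ∑' k : ℕ,
      (q : ℂ) ^ (k * (k - 1) / 2 : ℕ) * (-x * ((q : ℂ) * t)) ^ k /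
        (qPoch ((q : ℂ) * t) q (k + 1) * qPoch ((a : ℂ) * ((q : ℂ) * t)) q (k + 1)) =
      -∑' k : ℕ, W (k + 1) := by
    rw [← tsum_neg, ← tsum_mul_left]
    refine tsum_congr fun k => ?_
    have := hI2 k
    linear_combination -this
  have hW0 : W 0 = 1 := by simp [hWdef, qPoch]
  rw [hL, h1, Summable.tsum_eq_zero_add hWsum, hW0]
  ring
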